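/- arXiv:2006.09492 — 4 statements merged into one kernel-verified Lean document; each statement's English description precedes it below -/
import Mathlib

section
/- For n ≥ 2 and 1 ≤ k ≤ n−1, the cone D_{n,k} = {v ∈ ℝ^n : v_1 = … = v_k, −k·v_1 ≥ Σ_{j=k+1}^n |v_j|} equals the positive hull of the 2(n−k) vectors u_i^± := −(e_1+…+e_k) ± k·e_{k+i}, for i = 1,…,n−k. -/
open Finset


lemma eval6 (n k : ℕ) (hkn : k < n) (a : Fin (n - k) → ℝ) (s : ℝ) (j : Fin n) :
    (∑ i, a i • (fun j : Fin n =>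
        (if (j : ℕ) < k then (-1 : ℝ) else 0) + (if (j : ℕ) = k + i then s else 0))) j
    = if h : (j : ℕ) < k then -(∑ i, a i)
      else a ⟨(j : ℕ) - k, by omega⟩ * s := by
  rw [Finset.sum_apply]
  simp only [Pi.smul_apply, smul_eq_mul]
  by_cases h : (j : ℕ) < k
  · rw [dif_pos h, ← Finset.sum_neg_distrib]
    apply Finset.sum_congr rfl
    intro i _
    rw [if_pos h, if_neg (by omega)]
    ring
  · rw [dif_neg h]
    have this : ∀ i ∈ Finset.univ, a i * ((if (j : ℕ) < k then (-1 : ℝ) else 0)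
        + (if (j : ℕ) = k + i then s else 0))
        = if i = (⟨(j : ℕ) - k, by omega⟩ : Fin (n - k)) then a i * s else 0 := by
      intro i _
      rw [if_neg h]
      by_cases hi : (j : ℕ) = k + i
      · rw [if_pos hi, if_pos (by ext; simp; omega), zero_add]
      · rw [if_neg hi, if_neg (by intro he; apply hi; subst he; simp; omega)]
        ring
    rw [Finset.sum_congr rfl this, Finset.sum_ite_eq' _ _ (fun i => a i * s)]
    simp

lemma sumtail6 (n k : ℕ) (hkn : k < n) (g : Fin n → ℝ) :
    ∑ j : Fin n, (if k ≤ (j : ℕ) then g j else 0)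
      = ∑ i : Fin (n - k), g ⟨k + i, by omega⟩ := by
  have e1 : (∑ j : Fin n, (if k ≤ (j : ℕ) then g j else 0))
      = ∑ j ∈ Finset.range n, (if h : j < n then (if k ≤ j then g ⟨j, h⟩ else 0) else 0) := by
    rw [← Fin.sum_univ_eq_sum_range]
    exact Finset.sum_congr rfl fun j _ => by rw [dif_pos j.2]
  have e2 : (∑ i : Fin (n - k), g ⟨k + i, by omega⟩)
      = ∑ i ∈ Finset.range (n - k), (if h : k + i < n then g ⟨k + i, h⟩ else 0) := by
    rw [← Fin.sum_univ_eq_sum_range]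
    exact Finset.sum_congr rfl fun i _ => by rw [dif_pos (by omega)]
  rw [e1, e2, Finset.range_eq_Ico, ← Finset.sum_Ico_consecutive _ (Nat.zero_le k) hkn.le]
  have h1 : ∑ j ∈ Finset.Ico 0 k, (if h : j < n then (if k ≤ j then g ⟨j, h⟩ else 0) else 0) = 0 := by
    apply Finset.sum_eq_zero
    intro j hj
    simp only [Finset.mem_Ico] at hj
    rw [dif_pos (by omega), if_neg (by omega)]
  rw [h1, zero_add, Finset.sum_Ico_eq_sum_range]
  apply Finset.sum_congr rfl
  intro i hi
  simp only [Finset.mem_range] at hi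
  rw [dif_pos (by omega), dif_pos (by omega), if_pos (by omega)]

/-- For `n ≥ 2` and `1 ≤ k ≤ n-1`, the cone
`D_{n,k} = {v ∈ ℝ^n : v_1 = … = v_k, -k v_1 ≥ Σ_{j=k+1}^n |v_j|}` equals the positive hull
of the `2(n-k)` vectors `u_i^± = -(e_1 + … + e_k) ± k e_{k+i}`, `i = 1, …, n-k`. -/
theorem stmt6 (n k : ℕ) (hn : 2 ≤ n) (hk : 1 ≤ k) (hkn : k ≤ n - 1) :
    {v : Fin n → ℝ | (∀ i : Fin n, (i : ℕ) < k → v i = v ⟨0, by omega⟩) ∧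
      ∑ j : Fin n, (if k ≤ (j : ℕ) then |v j| else 0) ≤ -((k : ℝ) * v ⟨0, by omega⟩)}
    = {v : Fin n → ℝ | ∃ a b : Fin (n - k) → ℝ, (∀ i, 0 ≤ a i) ∧ (∀ i, 0 ≤ b i) ∧
      v = ∑ i, a i • (fun j : Fin n =>
            (if (j : ℕ) < k then (-1 : ℝ) else 0) + (if (j : ℕ) = k + i then (k : ℝ) else 0))
        + ∑ i, b i • (fun j : Fin n =>
            (if (j : ℕ) < k then (-1 : ℝ) else 0) + (if (j : ℕ) = k + i then -(k : ℝ) else 0))} := by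
  have hkn' : k < n := by omega
  have hk0 : (0 : ℝ) < (k : ℝ) := by positivity
  ext v
  simp only [Set.mem_setOf_eq]
  constructor
  · rintro ⟨hconst, hsum⟩
    set c := v ⟨0, by omega⟩ with hc
    set w : Fin (n - k) → ℝ := fun i => v ⟨k + i, by omega⟩ with hw
    have hS : ∑ i : Fin (n - k), |w i| ≤ -((k : ℝ) * c) := by
      rw [← sumtail6 n k hkn' (fun j => |v j|)]; exact hsum
    set S : ℝ := ∑ i : Fin (n - k), |w i| with hSdef
    set t : ℝ := (-((k : ℝ) * c) - S) / (2 * k) with ht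
    have ht0 : 0 ≤ t := by
      apply div_nonneg (by linarith) (by positivity)
    set i0 : Fin (n - k) := ⟨0, by omega⟩ with hi0
    refine ⟨fun i => (|w i| + w i) / (2 * k) + (if i = i0 then t else 0),
            fun i => (|w i| - w i) / (2 * k) + (if i = i0 then t else 0),
            fun i => add_nonneg (div_nonneg (by linarith [neg_abs_le (w i)]) (by positivity)) (by split <;> simp [ht0]),
            fun i => add_nonneg (div_nonneg (by linarith [le_abs_self (w i)]) (by positivity)) (by split <;> simp [ht0]), ?_⟩
    funext j
    rw [Pi.add_apply, eval6 n k hkn', eval6 n k hkn']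
    by_cases h : (j : ℕ) < k
    · rw [dif_pos h, dif_pos h, ← neg_add, ← Finset.sum_add_distrib]
      have hcomb : ∀ i : Fin (n - k),
          ((|w i| + w i) / (2 * k) + (if i = i0 then t else 0))
          + ((|w i| - w i) / (2 * k) + (if i = i0 then t else 0))
          = |w i| / k + (if i = i0 then 2 * t else 0) := by
        intro i; split <;> field_simp <;> ring
      rw [Finset.sum_congr rfl fun i _ => hcomb i, Finset.sum_add_distrib,
        Finset.sum_ite_eq' _ _ (fun _ => 2 * t), if_pos (Finset.mem_univ i0)]
      have : ∑ i : Fin (n - k), |w i| / k = S / k := by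
        rw [hSdef, Finset.sum_div]
      rw [this, hconst j h, ht]
      field_simp
      ring
    · rw [dif_neg h, dif_neg h]
      have : v j = w ⟨(j : ℕ) - k, by omega⟩ := by
        rw [hw]; congr 1; ext; simp; omega
      rw [this]
      set x := w ⟨(j : ℕ) - k, by omega⟩
      split <;> field_simp <;> ring
  · rintro ⟨a, b, ha, hb, rfl⟩
    have h0k : (0 : ℕ) < k := hk
    have heval : ∀ j : Fin n,
        (∑ i, a i • (fun j : Fin n =>
            (if (j : ℕ) < k then (-1 : ℝ) else 0) + (if (j : ℕ) = k + i then (k : ℝ) else 0))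
        + ∑ i, b i • (fun j : Fin n =>
            (if (j : ℕ) < k then (-1 : ℝ) else 0) + (if (j : ℕ) = k + i then -(k : ℝ) else 0))) j
        = if h : (j : ℕ) < k then -(∑ i, a i) + -(∑ i, b i)
          else a ⟨(j : ℕ) - k, by omega⟩ * k + b ⟨(j : ℕ) - k, by omega⟩ * (-k) := by
      intro j
      rw [Pi.add_apply, eval6 n k hkn', eval6 n k hkn']
      split <;> rfl
    have h0 : ((∑ i, a i • (fun j : Fin n =>
            (if (j : ℕ) < k then (-1 : ℝ) else 0) + (if (j : ℕ) = k + i then (k : ℝ) else 0))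
        + ∑ i, b i • (fun j : Fin n =>
            (if (j : ℕ) < k then (-1 : ℝ) else 0) + (if (j : ℕ) = k + i then -(k : ℝ) else 0)))
          (⟨0, by omega⟩ : Fin n)) = -(∑ i, a i) + -(∑ i, b i) := by
      rw [heval]; rw [dif_pos (by simpa using h0k)]
    constructor
    · intro i hi
      rw [heval, heval, dif_pos hi, dif_pos (by simpa using h0k)]
    · rw [h0, sumtail6 n k hkn']
      have hterm : ∀ i : Fin (n - k),
          |(∑ i', a i' • (fun j : Fin n =>
            (if (j : ℕ) < k then (-1 : ℝ) else 0) + (if (j : ℕ) = k + i' then (k : ℝ) else 0))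
          + ∑ i', b i' • (fun j : Fin n =>
            (if (j : ℕ) < k then (-1 : ℝ) else 0) + (if (j : ℕ) = k + i' then -(k : ℝ) else 0)))
            (⟨k + i, by omega⟩ : Fin n)| ≤ (a i + b i) * k := by
        intro i
        rw [heval, dif_neg (by simp)]
        have hidx : (⟨(((⟨k + i, by omega⟩ : Fin n) : ℕ)) - k, by omega⟩ : Fin (n - k)) = i := by
          ext; simp
        rw [hidx]
        rw [abs_le]
        constructor
        · have := mul_nonneg (ha i) hk0.le
          have := mul_nonneg (hb i) hk0.le
          nlinarith
        · have := mul_nonneg (ha i) hk0.le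
          have := mul_nonneg (hb i) hk0.le
          nlinarith
      calc ∑ i : Fin (n - k), _ ≤ ∑ i : Fin (n - k), (a i + b i) * k :=
            Finset.sum_le_sum fun i _ => hterm i
        _ = -((k : ℝ) * (-(∑ i, a i) + -(∑ i, b i))) := by
            simp only [add_mul]
            rw [Finset.sum_add_distrib, ← Finset.sum_mul, ← Finset.sum_mul]
            ring
        _ = _ := by rfl
end

section
/- Let F be a (k−1)-dimensional face of the n-dimensional regular crosspolytope P_n = conv{±e_1,…,±e_n}, say F = conv{e_1,…,e_k} (1 ≤ k ≤ n). Then the tangent cone of P_n at F equals {v ∈ ℝ^n : −Σ_{i=1}^k v_i ≥ Σ_{i=k+1}^n |v_i|}. -/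
open Finset

lemma sum_ite_lt_aux {n k : ℕ} (hkn : k ≤ n) (g : ℕ → ℝ) :
    ∑ i : Fin n, (if (i : ℕ) < k then g i else 0) = ∑ i ∈ Finset.range k, g i := by
  rw [Fin.sum_univ_eq_sum_range (fun i => if i < k then g i else 0) n]
  rw [← Finset.sum_subset (Finset.range_subset_range.2 hkn)
      (fun x _ hx => if_neg (by simpa using hx))]
  exact Finset.sum_congr rfl fun x hx => if_pos (Finset.mem_range.1 hx)

lemma sum_decomp_aux (n k : ℕ) (hk : 1 ≤ k) (hkn : k ≤ n) (ε : ℝ) (v : Fin n → ℝ) :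
    ∑ j : Fin n, (if (j : ℕ) < k then (1:ℝ)/k + ε * v j else ε * |v j|)
      = 1 + ε * (∑ i : Fin n, if (i : ℕ) < k then v i else 0)
          + ε * (∑ i : Fin n, if k ≤ (i : ℕ) then |v i| else 0) := by
  have hk0 : (0:ℝ) < k := by exact_mod_cast hk
  have hone : ∑ i : Fin n, (if (i : ℕ) < k then (1:ℝ)/k else 0) = 1 := by
    rw [sum_ite_lt_aux hkn (fun _ => (1:ℝ)/k)]
    rw [Finset.sum_const, Finset.card_range, nsmul_eq_mul]
    field_simp
  have hpt : ∀ j : Fin n, (if (j : ℕ) < k then (1:ℝ)/k + ε * v j else ε * |v j|)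
      = (if (j : ℕ) < k then (1:ℝ)/k else 0) + ε * (if (j : ℕ) < k then v j else 0)
        + ε * (if k ≤ (j : ℕ) then |v j| else 0) := by
    intro j
    by_cases hj : (j : ℕ) < k
    · simp [hj, not_le.2 hj]
    · simp [hj, not_lt.1 hj]
  rw [Finset.sum_congr rfl (fun j _ => hpt j), Finset.sum_add_distrib,
      Finset.sum_add_distrib, ← Finset.mul_sum, ← Finset.mul_sum, hone]

/-- Let `F = conv{e_1,…,e_k}` be a `(k-1)`-dimensional face of the crosspolytope
`P_n = {u : Σ|u_j| ≤ 1}`, and let `f` be its centroid, a relative interior point of `F`.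
Then the tangent cone of `P_n` at `F`, i.e. `{v : f + εv ∈ P_n for some ε > 0}`, equals
`{v : -Σ_{i=1}^k v_i ≥ Σ_{i=k+1}^n |v_i|}`. -/
theorem stmt8 (n k : ℕ) (hk : 1 ≤ k) (hkn : k ≤ n) :
    {v : Fin n → ℝ | ∃ ε : ℝ, 0 < ε ∧
      ((fun i : Fin n => if (i : ℕ) < k then 1 / (k : ℝ) else 0) + ε • v)
        ∈ {u : Fin n → ℝ | ∑ j, |u j| ≤ 1}}
    = {v : Fin n → ℝ |
        ∑ i : Fin n, (if k ≤ (i : ℕ) then |v i| else 0)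
          ≤ -∑ i : Fin n, (if (i : ℕ) < k then v i else 0)} := by
  have hk0 : (0:ℝ) < k := by exact_mod_cast hk
  ext v
  simp only [Set.mem_setOf_eq, Pi.add_apply, Pi.smul_apply, smul_eq_mul]
  set S1 := ∑ i : Fin n, (if (i : ℕ) < k then v i else 0) with hS1
  set S2 := ∑ i : Fin n, (if k ≤ (i : ℕ) then |v i| else 0) with hS2
  constructor
  · rintro ⟨ε, hε, h⟩
    have hge : ∀ j : Fin n, j ∈ Finset.univ → (if (j : ℕ) < k then (1:ℝ)/k + ε * v j else ε * |v j|)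
        ≤ |(if (j : ℕ) < k then (1:ℝ)/k else 0) + ε * v j| := by
      intro j _
      by_cases hj : (j : ℕ) < k
      · simp only [if_pos hj]; exact le_abs_self _
      · simp only [if_neg hj, zero_add, abs_mul, abs_of_pos hε, le_refl]
    have hle : 1 + ε * S1 + ε * S2 ≤ 1 := by
      calc 1 + ε * S1 + ε * S2
          = ∑ j : Fin n, (if (j : ℕ) < k then (1:ℝ)/k + ε * v j else ε * |v j|) :=
            (sum_decomp_aux n k hk hkn ε v).symm
        _ ≤ ∑ j : Fin n, |(if (j : ℕ) < k then (1:ℝ)/k else 0) + ε * v j| :=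
            Finset.sum_le_sum hge
        _ ≤ 1 := h
    have h2 : ε * (S1 + S2) ≤ ε * 0 := by nlinarith
    have h3 : S1 + S2 ≤ 0 := le_of_mul_le_mul_left h2 hε
    linarith
  · intro h
    set M := ∑ i : Fin n, |v i| with hM
    have hM0 : 0 ≤ M := Finset.sum_nonneg fun i _ => abs_nonneg _
    set ε : ℝ := 1 / ((k : ℝ) * (1 + M)) with hεdef
    have hε : 0 < ε := by positivity
    refine ⟨ε, hε, ?_⟩
    have hεM : ε * M ≤ 1 / (k : ℝ) := by
      rw [hεdef, div_mul_eq_mul_div, one_mul, div_le_div_iff₀ (by positivity) hk0]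
      nlinarith
    have habs : ∀ j : Fin n, (j : ℕ) < k → 0 ≤ (1:ℝ)/k + ε * v j := by
      intro j _
      have h1 : |v j| ≤ M :=
        Finset.single_le_sum (f := fun i => |v i|) (fun i _ => abs_nonneg _) (Finset.mem_univ j)
      have h2 : ε * |v j| ≤ ε * M := mul_le_mul_of_nonneg_left h1 hε.le
      have h3 := neg_abs_le (v j)
      nlinarith
    have heq : ∑ j : Fin n, |(if (j : ℕ) < k then (1:ℝ)/k else 0) + ε * v j|
        = ∑ j : Fin n, (if (j : ℕ) < k then (1:ℝ)/k + ε * v j else ε * |v j|) := by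
      refine Finset.sum_congr rfl fun j _ => ?_
      by_cases hj : (j : ℕ) < k
      · simp only [if_pos hj]; exact abs_of_nonneg (habs j hj)
      · simp only [if_neg hj, zero_add, abs_mul, abs_of_pos hε]
    show ∑ j : Fin n, |(if (j : ℕ) < k then (1:ℝ)/k else 0) + ε * v j| ≤ 1
    rw [heq, sum_decomp_aux n k hk hkn ε v]
    nlinarith [mul_le_mul_of_nonneg_left h hε.le]
end

section
/- Every k-dimensional face of the cone C_n^□(σ²) is isometric to C^□_{k−1}(σ² + n − k + 1). Concretely: the vectors v_ε := σe_{n+1} + Σ_{i=1}^{k−1}ε_i e_i + Σ_{i=k}^n e_i, ε ∈ {−1,1}^{k−1}, spanning a k-face, have pairwise scalar products ⟨v_ε, v_η⟩ = σ² + ⟨ε,η⟩ + n − k + 1. -/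
open Finset Matrix

/-- The sign `±1` encoded by a Boolean. -/
def sgn (b : Bool) : ℝ := if b then 1 else -1

/-- The vectors `v_ε = σ e_{n+1} + Σ_{i=1}^{k-1} ε_i e_i + Σ_{i=k}^n e_i`, `ε ∈ {-1,1}^{k-1}`,
spanning a `k`-dimensional face of `C_n^□(σ²)`, have pairwise scalar products
`⟨v_ε, v_η⟩ = σ² + ⟨ε,η⟩ + n - k + 1`; hence (having the same Gram matrix as the spanning
vectors of `C^□_{k-1}(σ² + n - k + 1)`) every `k`-face of `C_n^□(σ²)` is isometric to
`C^□_{k-1}(σ² + n - k + 1)`. -/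
theorem stmt13 (n k : ℕ) (hk : 1 ≤ k) (hkn : k ≤ n + 1) (σ : ℝ) (hσ : 0 < σ) :
    ∀ ε η : Fin (k - 1) → Bool,
      (fun j : Fin (n + 1) => if h : (j : ℕ) < k - 1 then sgn (ε ⟨(j : ℕ), h⟩)
          else if (j : ℕ) = n then σ else 1)
        ⬝ᵥ (fun j : Fin (n + 1) => if h : (j : ℕ) < k - 1 then sgn (η ⟨(j : ℕ), h⟩)
          else if (j : ℕ) = n then σ else 1)
      = σ ^ 2 + (∑ i : Fin (k - 1), sgn (ε i) * sgn (η i)) + ((n : ℝ) - k + 1) := by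
  intro ε η
  have hkn' : k - 1 ≤ n := by omega
  set F : ℕ → ℝ := fun j => if h : j < k - 1 then sgn (ε ⟨j, h⟩) * sgn (η ⟨j, h⟩)
      else if j = n then σ * σ else 1 with hF
  have h1 : (fun j : Fin (n + 1) => if h : (j : ℕ) < k - 1 then sgn (ε ⟨(j : ℕ), h⟩)
          else if (j : ℕ) = n then σ else 1)
        ⬝ᵥ (fun j : Fin (n + 1) => if h : (j : ℕ) < k - 1 then sgn (η ⟨(j : ℕ), h⟩)
          else if (j : ℕ) = n then σ else 1)
      = ∑ j ∈ Finset.range (n + 1), F j := by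
    rw [dotProduct, ← Fin.sum_univ_eq_sum_range]
    refine Finset.sum_congr rfl fun j _ => ?_
    simp only [hF]
    split_ifs with h h2
    · rfl
    · rfl
    · ring
  rw [h1, Finset.sum_range_succ]
  have hn : F n = σ * σ := by
    simp only [hF]
    rw [dif_neg (by omega)]; simp
  rw [hn, Finset.range_eq_Ico, ← Finset.sum_Ico_consecutive _ (Nat.zero_le (k-1)) hkn']
  have h2 : ∑ j ∈ Finset.Ico 0 (k - 1), F j = ∑ i : Fin (k - 1), sgn (ε i) * sgn (η i) := by
    rw [← Finset.range_eq_Ico, ← Fin.sum_univ_eq_sum_range (fun j => F j)]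
    refine Finset.sum_congr rfl fun i _ => ?_
    simp only [hF]
    rw [dif_pos i.isLt]
  have h3 : ∑ j ∈ Finset.Ico (k - 1) n, F j = ((n : ℝ) - k + 1) := by
    have hc : ∀ j ∈ Finset.Ico (k - 1) n, F j = 1 := by
      intro j hj
      rw [Finset.mem_Ico] at hj
      simp only [hF]
      rw [dif_neg (by omega), if_neg (by omega)]
    rw [Finset.sum_congr rfl hc, Finset.sum_const, Nat.card_Ico, nsmul_eq_mul, mul_one]
    push_cast [Nat.cast_sub hkn', Nat.cast_sub hk]
    ring
  rw [h2, h3]; ring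
end

section
/- Let Q ⊂ ℝ^n be a full-dimensional polyhedron (finite intersection of closed half-spaces) and S ⊂ ℝ^n a linear subspace of codimension l ∈ {1,…,n−1} in general position with respect to the affine hulls of all faces of Q. If S ∩ Q ≠ ∅, then S ∩ int(Q) ≠ ∅. -/
open Finset Matrix

variable {V : Type*} [AddCommGroup V] [Module ℝ V]

/-- Dimension of an affine subspace: the rank of its direction. -/
noncomputable def adim (A : AffineSubspace ℝ V) : ℕ := Module.finrank ℝ A.direction

/-- `S` (of codimension `l`) is in general position with respect to the affine subspace `A`:
if `A` is nonempty, then `S ∩ A` is empty when `dim A < l`, and is nonempty of dimension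
`dim A − l` otherwise. -/
def GenPos (l : ℕ) (S A : AffineSubspace ℝ V) : Prop :=
  (A : Set V).Nonempty →
    ((adim A < l → S ⊓ A = ⊥) ∧
     (l ≤ adim A → S ⊓ A ≠ ⊥ ∧ adim (S ⊓ A) = adim A - l))

/-- Dot product with a fixed vector, as a linear map. -/
def dotLin {n : ℕ} (a : Fin n → ℝ) : (Fin n → ℝ) →ₗ[ℝ] ℝ where
  toFun w := a ⬝ᵥ w
  map_add' x y := dotProduct_add a x y
  map_smul' r x := by simp [dotProduct_smul, smul_eq_mul]

lemma contDot {n : ℕ} (a : Fin n → ℝ) : Continuous fun y : Fin n → ℝ => a ⬝ᵥ y := by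
  simp only [dotProduct]
  exact continuous_finset_sum _ fun j _ => continuous_const.mul (continuous_apply j)

/-- Dot product with a fixed vector, as a continuous linear map. -/
def dotCLM {n : ℕ} (a : Fin n → ℝ) : (Fin n → ℝ) →L[ℝ] ℝ :=
  ⟨dotLin a, contDot a⟩

/-- A Gordan-type alternative: given finitely many vectors `v i` and a subspace `W`,
either some `w ∈ W` has `v i ⬝ᵥ w < 0` for all `i`, or some nontrivial nonnegative
combination of the `v i` is orthogonal to `W`. -/
lemma gordan_alt {n : ℕ} {ι : Type*} [Fintype ι] [DecidableEq ι]
    (v : ι → (Fin n → ℝ)) (W : Submodule ℝ (Fin n → ℝ)) :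
    (∃ w ∈ W, ∀ i, v i ⬝ᵥ w < 0) ∨
    ∃ lam : ι → ℝ, (∀ i, 0 ≤ lam i) ∧ (∃ j, 0 < lam j) ∧
      ∀ w ∈ W, (∑ i, lam i • v i) ⬝ᵥ w = 0 := by
  by_cases h : ∃ w ∈ W, ∀ i, v i ⬝ᵥ w < 0
  · exact Or.inl h
  right
  set T : (Fin n → ℝ) →ₗ[ℝ] (ι → ℝ) := LinearMap.pi (fun i => dotLin (v i)) with hT
  set D : Submodule ℝ (ι → ℝ) := W.map T with hD
  set O : Set (ι → ℝ) := {y | ∀ i, y i < 0} with hO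
  have hOopen : IsOpen O := by
    have : O = ⋂ i, {y : ι → ℝ | y i < 0} := by
      ext y; simp [hO, Set.mem_iInter]
    rw [this]
    exact isOpen_iInter_of_finite fun i => isOpen_lt (continuous_apply i) continuous_const
  have hOconv : Convex ℝ O := by
    intro y hy z hz a b ha hb hab
    intro i
    have h1 : y i < 0 := hy i
    have h2 : z i < 0 := hz i
    simp only [Pi.add_apply, Pi.smul_apply, smul_eq_mul]
    rcases lt_or_eq_of_le ha with hga | hga
    · have hay : a * y i < 0 := mul_neg_of_pos_of_neg hga h1
      have hbz : b * z i ≤ 0 := mul_nonpos_of_nonneg_of_nonpos hb h2.le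
      linarith
    · have hb1 : b = 1 := by linarith
      rw [← hga, hb1]
      simpa using h2
  have hdisj : Disjoint O (D : Set (ι → ℝ)) := by
    rw [Set.disjoint_left]
    rintro y hyO ⟨w, hw, rfl⟩
    exact h ⟨w, hw, fun i => hyO i⟩
  obtain ⟨f, u, hfO, hfD⟩ := geometric_hahn_banach_open hOconv hOopen D.convex hdisj
  have hf0 : ∀ b ∈ D, f b = 0 := by
    intro b hb
    by_contra hfb
    have ht : ∀ t : ℝ, u ≤ t * f b := by
      intro t
      have := hfD (t • b) (D.smul_mem t hb)
      rwa [f.map_smul, smul_eq_mul] at this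
    have := ht ((u - 1) / f b)
    rw [div_mul_cancel₀ _ hfb] at this
    linarith
  have hu0 : u ≤ 0 := by simpa using hfD 0 D.zero_mem
  set lam : ι → ℝ := fun i => f (fun j => if i = j then (1 : ℝ) else 0) with hlam
  have hrep : ∀ y : ι → ℝ, f y = ∑ i, y i * lam i := by
    intro y
    conv_lhs => rw [pi_eq_sum_univ y]
    rw [map_sum]
    refine Finset.sum_congr rfl fun i _ => ?_
    rw [f.map_smul, smul_eq_mul]
  have hnn : ∀ i, 0 ≤ lam i := by
    intro i
    by_contra hneg
    push_neg at hneg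
    set cst : ι → ℝ := fun _ => (-1 : ℝ) with hcst
    set t : ℝ := min ((u - f cst) / lam i) 0 with htdef
    have ht0 : t ≤ 0 := min_le_right _ _
    have hy : (cst + t • fun j => if i = j then (1 : ℝ) else 0) ∈ O := by
      intro j
      by_cases hij : i = j <;>
        simp [hcst, hij] <;> linarith
    have hfy := hfO _ hy
    rw [f.map_add, f.map_smul, smul_eq_mul] at hfy
    have h1 : t ≤ (u - f cst) / lam i := min_le_left _ _
    have h2 : (u - f cst) / lam i * lam i ≤ t * lam i :=
      mul_le_mul_of_nonpos_right h1 (le_of_lt hneg)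
    rw [div_mul_cancel₀ _ (ne_of_lt hneg)] at h2
    have : f cst + t * lam i = f cst + t * f (fun j => if i = j then (1:ℝ) else 0) := rfl
    linarith [hfy]
  have hex : ∃ j, 0 < lam j := by
    by_contra hno
    push_neg at hno
    have hlz : ∀ i, lam i = 0 := fun i => le_antisymm (hno i) (hnn i)
    have hc : (fun _ => (-1 : ℝ) : ι → ℝ) ∈ O := fun i => by norm_num
    have := hfO _ hc
    rw [hrep] at this
    simp [hlz] at this
    linarith
  refine ⟨lam, hnn, hex, ?_⟩
  intro w hw
  have hTw : f (T w) = 0 := hf0 _ (Submodule.mem_map_of_mem hw)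
  rw [hrep] at hTw
  have hTwi : ∀ i, T w i = v i ⬝ᵥ w := fun i => rfl
  calc (∑ i, lam i • v i) ⬝ᵥ w = ∑ i, (lam i • v i) ⬝ᵥ w := by
        simp [dotProduct, Finset.sum_mul, Finset.mul_sum]
        rw [Finset.sum_comm]
    _ = ∑ i, T w i * lam i := by
        refine Finset.sum_congr rfl fun i _ => ?_
        rw [smul_dotProduct, hTwi i, smul_eq_mul, mul_comm]
    _ = 0 := hTw

/-- Let `Q ⊂ ℝ^n` be a full-dimensional polyhedron (a finite intersection of closed
half-spaces) and `S` a linear subspace of codimension `l ∈ {1,…,n−1}` in general position with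
respect to the affine hulls of all faces of `Q`. If `S ∩ Q ≠ ∅`, then `S ∩ int(Q) ≠ ∅`. -/
theorem stmt18 (n l : ℕ) (hl1 : 1 ≤ l) (hln : l ≤ n - 1)
    (Q : Set (Fin n → ℝ))
    (hQ : ∃ (m : ℕ) (v : Fin m → (Fin n → ℝ)) (c : Fin m → ℝ),
      Q = {x : Fin n → ℝ | ∀ i, v i ⬝ᵥ x ≤ c i})
    (hQdim : affineSpan ℝ Q = ⊤)
    (S : AffineSubspace ℝ (Fin n → ℝ)) (hS0 : (0 : Fin n → ℝ) ∈ S)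
    (hSdim : adim S = n - l)
    (hgp : ∀ F : Set (Fin n → ℝ), IsExposed ℝ Q F → GenPos l S (affineSpan ℝ F))
    (hSQ : ((S : Set (Fin n → ℝ)) ∩ Q).Nonempty) :
    ((S : Set (Fin n → ℝ)) ∩ interior Q).Nonempty := by
  classical
  obtain ⟨m, v, c, hQdef⟩ := hQ
  obtain ⟨x, hxS, hxQ⟩ := hSQ
  have hxQ' : ∀ i, v i ⬝ᵥ x ≤ c i := by rw [hQdef] at hxQ; exact hxQ
  set A : Finset (Fin m) := Finset.univ.filter (fun i => v i ≠ 0 ∧ v i ⬝ᵥ x = c i) with hA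
  have hmemA : ∀ i ∈ A, v i ≠ 0 ∧ v i ⬝ᵥ x = c i := fun i hi => (Finset.mem_filter.1 hi).2
  have hstrict : ∀ i, i ∉ A → v i ≠ 0 → v i ⬝ᵥ x < c i := by
    intro i hi hvi
    rcases lt_or_eq_of_le (hxQ' i) with h | h
    · exact h
    · exact absurd (Finset.mem_filter.2 ⟨Finset.mem_univ _, hvi, h⟩) hi
  have hzero : ∀ i, v i = 0 → 0 ≤ c i := by
    intro i hi
    have := hxQ' i
    rwa [hi, zero_dotProduct] at this
  set U₂ : Set (Fin n → ℝ) := {y | ∀ i, i ∉ A → v i ≠ 0 → v i ⬝ᵥ y < c i} with hU₂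
  have hU₂open : IsOpen U₂ := by
    have : U₂ = ⋂ i, {y : Fin n → ℝ | i ∉ A → v i ≠ 0 → v i ⬝ᵥ y < c i} := by
      ext y; simp [hU₂, Set.mem_iInter]
    rw [this]
    refine isOpen_iInter_of_finite fun i => ?_
    by_cases h1 : i ∉ A ∧ v i ≠ 0
    · have he : {y : Fin n → ℝ | i ∉ A → v i ≠ 0 → v i ⬝ᵥ y < c i}
          = {y : Fin n → ℝ | v i ⬝ᵥ y < c i} := by
        ext y; simp [h1.1, h1.2]
      rw [he]
      exact isOpen_lt (contDot (v i)) continuous_const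
    · have he : {y : Fin n → ℝ | i ∉ A → v i ≠ 0 → v i ⬝ᵥ y < c i} = Set.univ := by
        ext y; simp only [Set.mem_setOf_eq, Set.mem_univ, iff_true]
        intro h2 h3; exact absurd ⟨h2, h3⟩ h1
      rw [he]; exact isOpen_univ
  have hxU₂ : x ∈ U₂ := fun i hi hvi => hstrict i hi hvi
  set U : Set (Fin n → ℝ) := {y | ∀ i, v i ≠ 0 → v i ⬝ᵥ y < c i} with hU
  have hUopen : IsOpen U := by
    have : U = ⋂ i, {y : Fin n → ℝ | v i ≠ 0 → v i ⬝ᵥ y < c i} := by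
      ext y; simp [hU, Set.mem_iInter]
    rw [this]
    refine isOpen_iInter_of_finite fun i => ?_
    by_cases h1 : v i ≠ 0
    · have he : {y : Fin n → ℝ | v i ≠ 0 → v i ⬝ᵥ y < c i}
          = {y : Fin n → ℝ | v i ⬝ᵥ y < c i} := by
        ext y; simp [h1]
      rw [he]
      exact isOpen_lt (contDot (v i)) continuous_const
    · have he : {y : Fin n → ℝ | v i ≠ 0 → v i ⬝ᵥ y < c i} = Set.univ := by
        ext y; simp only [Set.mem_setOf_eq, Set.mem_univ, iff_true]
        intro h2; exact absurd h2 h1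
      rw [he]; exact isOpen_univ
  have hUQ : U ⊆ Q := by
    intro y hy
    rw [hQdef]
    intro i
    by_cases hv : v i = 0
    · rw [hv, zero_dotProduct]; exact hzero i hv
    · exact (hy i hv).le
  have hUint : U ⊆ interior Q := interior_maximal hUQ hUopen
  rcases gordan_alt (fun i : ↥A => v i) S.direction with ⟨w, hwW, hw⟩ | ⟨lam, hnn, ⟨j, hj⟩, horth⟩
  · -- there is a direction w in S pointing strictly inside all active constraints
    have hcont : Continuous (fun ε : ℝ => x + ε • w) :=
      continuous_const.add (continuous_id.smul continuous_const)
    have htend : Filter.Tendsto (fun ε : ℝ => x + ε • w) (nhds 0) (nhds x) := by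
      have := hcont.tendsto 0
      simpa using this
    have hev0 : ∀ᶠ ε in nhds (0 : ℝ), x + ε • w ∈ U₂ := htend (hU₂open.mem_nhds hxU₂)
    have hev : ∀ᶠ ε in nhdsWithin (0:ℝ) (Set.Ioi 0), x + ε • w ∈ U₂ :=
      hev0.filter_mono nhdsWithin_le_nhds
    have hpos : ∀ᶠ ε in nhdsWithin (0:ℝ) (Set.Ioi 0), ε ∈ Set.Ioi (0:ℝ) :=
      eventually_mem_nhdsWithin
    obtain ⟨ε, hεU₂, hεpos⟩ := (hev.and hpos).exists
    refine ⟨x + ε • w, ?_, hUint ?_⟩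
    · have h1 : ε • w ∈ S.direction := Submodule.smul_mem _ _ hwW
      have h2 := AffineSubspace.vadd_mem_of_mem_direction h1 hxS
      have : (ε • w) +ᵥ x = x + ε • w := by
        simp [vadd_eq_add, add_comm]
      rwa [this] at h2
    · intro i hvi
      by_cases hiA : i ∈ A
      · have h1 : v i ⬝ᵥ x = c i := (hmemA i hiA).2
        have h2 : v i ⬝ᵥ w < 0 := hw ⟨i, hiA⟩
        have h3 : v i ⬝ᵥ (x + ε • w) = c i + ε * (v i ⬝ᵥ w) := by
          rw [dotProduct_add, dotProduct_smul, h1, smul_eq_mul]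
        rw [h3]
        have hε0 : (0:ℝ) < ε := hεpos
        nlinarith
      · exact hεU₂ i hiA hvi
  · -- impossible: a nontrivial nonnegative combination of active normals kills S.direction
    exfalso
    set L₀ : Submodule ℝ (Fin n → ℝ) := ⨅ i : ↥A, LinearMap.ker (dotLin (v i)) with hL₀
    have hmemL₀ : ∀ z, z ∈ L₀ ↔ ∀ i : ↥A, v (i : Fin m) ⬝ᵥ z = 0 := by
      intro z
      simp [hL₀, Submodule.mem_iInf, LinearMap.mem_ker, dotLin]
    set F : Set (Fin n → ℝ) := {y | y ∈ Q ∧ ∀ i ∈ A, v i ⬝ᵥ y = c i} with hF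
    have hxF : x ∈ F := ⟨hxQ, fun i hi => (hmemA i hi).2⟩
    have hFQ : ∀ y ∈ F, ∀ i, v i ⬝ᵥ y ≤ c i := by
      intro y hy i
      have := hy.1
      rw [hQdef] at this
      exact this i
    have hFexp : IsExposed ℝ Q F := by
      intro _
      refine ⟨dotCLM (∑ i ∈ A, v i), ?_⟩
      have hval : ∀ y, dotCLM (∑ i ∈ A, v i) y = ∑ i ∈ A, v i ⬝ᵥ y := by
        intro y
        show (∑ i ∈ A, v i) ⬝ᵥ y = _
        rw [← Finset.sum_apply]
        simp [dotProduct, Finset.sum_mul]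
        exact Finset.sum_comm
      ext y
      constructor
      · intro hy
        refine ⟨hy.1, fun z hz => ?_⟩
        rw [hval, hval]
        have h1 : ∑ i ∈ A, v i ⬝ᵥ y = ∑ i ∈ A, c i :=
          Finset.sum_congr rfl fun i hi => hy.2 i hi
        rw [h1]
        refine Finset.sum_le_sum fun i _ => ?_
        rw [hQdef] at hz
        exact hz i
      · rintro ⟨hyQ, hymax⟩
        refine ⟨hyQ, ?_⟩
        have h1 : ∑ i ∈ A, c i ≤ ∑ i ∈ A, v i ⬝ᵥ y := by
          have := hymax x hxQ
          rw [hval, hval] at this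
          calc ∑ i ∈ A, c i = ∑ i ∈ A, v i ⬝ᵥ x :=
                (Finset.sum_congr rfl fun i hi => ((hmemA i hi).2).symm)
            _ ≤ _ := this
        have h2 : ∀ i ∈ A, v i ⬝ᵥ y ≤ c i := by
          intro i _
          rw [hQdef] at hyQ
          exact hyQ i
        have h3 : ∑ i ∈ A, v i ⬝ᵥ y = ∑ i ∈ A, c i :=
          le_antisymm (Finset.sum_le_sum h2) h1
        exact fun i hi => (Finset.sum_eq_sum_iff_of_le h2).1 h3 i hi
    set L : AffineSubspace ℝ (Fin n → ℝ) := AffineSubspace.mk' x L₀ with hLdef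
    have haffle : affineSpan ℝ F ≤ L := by
      rw [affineSpan_le]
      intro y hy
      refine AffineSubspace.mem_mk'.2 ?_
      rw [hmemL₀]
      rintro ⟨i, hi⟩
      have h1 : v i ⬝ᵥ y = c i := hy.2 i hi
      have h2 : v i ⬝ᵥ x = c i := (hmemA i hi).2
      show v i ⬝ᵥ (y - x) = 0
      rw [dotProduct_sub, h1, h2, sub_self]
    have hLle : L ≤ affineSpan ℝ F := by
      intro y hy
      have hz : y - x ∈ L₀ := AffineSubspace.mem_mk'.1 hy
      set z := y - x with hzdef
      -- find δ > 0 with x + δ • z ∈ U₂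
      have hcont : Continuous (fun δ : ℝ => x + δ • z) :=
        continuous_const.add (continuous_id.smul continuous_const)
      have htend : Filter.Tendsto (fun δ : ℝ => x + δ • z) (nhds 0) (nhds x) := by
        have := hcont.tendsto 0
        simpa using this
      have hev0 : ∀ᶠ δ in nhds (0 : ℝ), x + δ • z ∈ U₂ := htend (hU₂open.mem_nhds hxU₂)
      have hev : ∀ᶠ δ in nhdsWithin (0:ℝ) (Set.Ioi 0), x + δ • z ∈ U₂ :=
        hev0.filter_mono nhdsWithin_le_nhds
      obtain ⟨δ, hδU₂, hδpos⟩ := (hev.and eventually_mem_nhdsWithin).exists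
      have hδ0 : (0:ℝ) < δ := hδpos
      have hδF : x + δ • z ∈ F := by
        have heq : ∀ i ∈ A, v i ⬝ᵥ (x + δ • z) = c i := by
          intro i hi
          have h0 : v i ⬝ᵥ z = 0 := (hmemL₀ z).1 hz ⟨i, hi⟩
          rw [dotProduct_add, dotProduct_smul, h0, smul_zero, add_zero]
          exact (hmemA i hi).2
        refine ⟨?_, heq⟩
        rw [hQdef]
        intro i
        by_cases hiA : i ∈ A
        · exact (heq i hiA).le
        · by_cases hvi : v i = 0
          · rw [hvi, zero_dotProduct]; exact hzero i hvi
          · exact (hδU₂ i hiA hvi).le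
      have hxspan : x ∈ affineSpan ℝ F := subset_affineSpan ℝ F hxF
      have hd : δ • z ∈ (affineSpan ℝ F).direction := by
        have h1 := AffineSubspace.vsub_mem_direction
          (subset_affineSpan ℝ F hδF) hxspan
        have h2 : (x + δ • z) -ᵥ x = δ • z := by
          simp [vsub_eq_sub]
        rwa [h2] at h1
      have hzd : z ∈ (affineSpan ℝ F).direction := by
        have := Submodule.smul_mem _ δ⁻¹ hd
        rwa [smul_smul, inv_mul_cancel₀ (ne_of_gt hδ0), one_smul] at this
      have : z +ᵥ x ∈ affineSpan ℝ F :=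
        AffineSubspace.vadd_mem_of_mem_direction hzd hxspan
      have hyx : z +ᵥ x = y := by
        simp [hzdef, vadd_eq_add]
      rwa [hyx] at this
    have haff : affineSpan ℝ F = L := le_antisymm haffle hLle
    -- apply general position
    have hGP := hgp F hFexp
    rw [haff] at hGP
    have hne : (L : Set (Fin n → ℝ)).Nonempty := ⟨x, AffineSubspace.self_mem_mk' x L₀⟩
    obtain ⟨h1, h2⟩ := hGP hne
    have hLdir : L.direction = L₀ := by
      rw [hLdef]; exact AffineSubspace.direction_mk' x L₀
    have hadimL : adim L = Module.finrank ℝ L₀ := by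
      unfold adim; rw [hLdir]
    set k := Module.finrank ℝ L₀ with hk
    have hxSL : x ∈ S ⊓ L :=
      (AffineSubspace.mem_inf_iff x S L).2 ⟨hxS, AffineSubspace.self_mem_mk' x L₀⟩
    have hkl : l ≤ k := by
      by_contra hc
      push_neg at hc
      have := h1 (by rw [hadimL]; exact hc)
      rw [this] at hxSL
      exact AffineSubspace.notMem_bot ℝ _ x hxSL
    obtain ⟨-, hdim⟩ := h2 (by rw [hadimL]; exact hkl)
    rw [hadimL] at hdim
    have hdir : (S ⊓ L).direction = S.direction ⊓ L₀ := by
      rw [AffineSubspace.direction_inf_of_mem hxS (AffineSubspace.self_mem_mk' x L₀)]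
      simp only [hLdef, AffineSubspace.direction_mk']
    have hinf : Module.finrank ℝ ↥(S.direction ⊓ L₀) = k - l := by
      rw [← hdir]
      exact hdim
    have hWr : Module.finrank ℝ S.direction = n - l := hSdim
    have hsum := Submodule.finrank_sup_add_finrank_inf_eq S.direction L₀
    have hfintop : Module.finrank ℝ (Fin n → ℝ) = n := Module.finrank_fin_fun ℝ
    have hles : Module.finrank ℝ ↥(S.direction ⊔ L₀) ≤ n :=
      (Submodule.finrank_le _).trans (le_of_eq hfintop)
    have hkle : k ≤ n :=
      (le_of_eq hk).trans ((Submodule.finrank_le _).trans (le_of_eq hfintop))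
    have hln' : l ≤ n := by omega
    have htop : S.direction ⊔ L₀ = ⊤ := by
      apply Submodule.eq_top_of_finrank_eq
      rw [hfintop]
      omega
    -- now derive that the combination is zero
    set u₀ : Fin n → ℝ := ∑ i : ↥A, lam i • v i with hu₀def
    have hu₀L₀ : ∀ z ∈ L₀, u₀ ⬝ᵥ z = 0 := by
      intro z hz
      have hvz : ∀ i : ↥A, v (i : Fin m) ⬝ᵥ z = 0 := (hmemL₀ z).1 hz
      have : u₀ ⬝ᵥ z = ∑ i : ↥A, lam i * (v (i : Fin m) ⬝ᵥ z) := by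
        simp [hu₀def, dotProduct, Finset.sum_mul, Finset.mul_sum]
        rw [Finset.sum_comm]
        refine Finset.sum_congr rfl fun i _ => Finset.sum_congr rfl fun p _ => by ring
      rw [this]
      simp [hvz]
    have hu₀ : u₀ = 0 := by
      rw [← dotProduct_self_eq_zero]
      have hmem : u₀ ∈ S.direction ⊔ L₀ := by rw [htop]; exact Submodule.mem_top
      obtain ⟨a, ha, b, hb, hab⟩ := Submodule.mem_sup.1 hmem
      calc u₀ ⬝ᵥ u₀ = u₀ ⬝ᵥ (a + b) := by rw [hab]
        _ = 0 := by rw [dotProduct_add, horth a ha, hu₀L₀ b hb, add_zero]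
    have hdotu₀ : ∀ y, ∑ i : ↥A, lam i * (v (i : Fin m) ⬝ᵥ y) = 0 := by
      intro y
      have : u₀ ⬝ᵥ y = ∑ i : ↥A, lam i * (v (i : Fin m) ⬝ᵥ y) := by
        simp [hu₀def, dotProduct, Finset.sum_mul, Finset.mul_sum]
        rw [Finset.sum_comm]
        refine Finset.sum_congr rfl fun i _ => Finset.sum_congr rfl fun p _ => by ring
      rw [← this, hu₀, zero_dotProduct]
    have hsumc : ∑ i : ↥A, lam i * c (i : Fin m) = 0 := by
      have := hdotu₀ x
      calc ∑ i : ↥A, lam i * c (i : Fin m)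
          = ∑ i : ↥A, lam i * (v (i : Fin m) ⬝ᵥ x) :=
            Finset.sum_congr rfl fun i _ => by rw [(hmemA i i.2).2]
        _ = 0 := this
    have hQeq : ∀ y ∈ Q, v (j : Fin m) ⬝ᵥ y = c (j : Fin m) := by
      intro y hyQ
      have hterm : ∑ i : ↥A, lam i * (c (i : Fin m) - v (i : Fin m) ⬝ᵥ y) = 0 := by
        have h1 := hdotu₀ y
        have : ∑ i : ↥A, lam i * (c (i : Fin m) - v (i : Fin m) ⬝ᵥ y)
            = ∑ i : ↥A, lam i * c (i : Fin m) - ∑ i : ↥A, lam i * (v (i : Fin m) ⬝ᵥ y) := by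
          rw [← Finset.sum_sub_distrib]
          exact Finset.sum_congr rfl fun i _ => by ring
        rw [this, hsumc, h1, sub_zero]
      have hynn : ∀ i : ↥A, 0 ≤ lam i * (c (i : Fin m) - v (i : Fin m) ⬝ᵥ y) := by
        intro i
        refine mul_nonneg (hnn i) (sub_nonneg.2 ?_)
        rw [hQdef] at hyQ
        exact hyQ i
      have := (Finset.sum_eq_zero_iff_of_nonneg (fun i _ => hynn i)).1 hterm j (Finset.mem_univ _)
      have hcj : c (j : Fin m) - v (j : Fin m) ⬝ᵥ y = 0 := by
        rcases mul_eq_zero.1 this with h | h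
        · exact absurd h (ne_of_gt hj)
        · exact h
      linarith [hcj]
    -- Q lies in a hyperplane, contradicting full-dimensionality
    have hvj : v (j : Fin m) ≠ 0 := (hmemA j j.2).1
    have hvjx : v (j : Fin m) ⬝ᵥ x = c (j : Fin m) := (hmemA j j.2).2
    set H : AffineSubspace ℝ (Fin n → ℝ) :=
      AffineSubspace.mk' x (LinearMap.ker (dotLin (v (j : Fin m)))) with hH
    have hQH : Q ⊆ (H : Set (Fin n → ℝ)) := by
      intro y hy
      refine AffineSubspace.mem_mk'.2 ?_
      show v (j : Fin m) ⬝ᵥ (y - x) = 0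
      rw [dotProduct_sub, hQeq y hy, hvjx, sub_self]
    have hle : affineSpan ℝ Q ≤ H := affineSpan_le.2 hQH
    rw [hQdim] at hle
    have hmem : x + v (j : Fin m) ∈ H := hle (AffineSubspace.mem_top ℝ _ _)
    have : v (j : Fin m) ⬝ᵥ (x + v (j : Fin m) - x) = 0 :=
      AffineSubspace.mem_mk'.1 hmem
    rw [add_sub_cancel_left, dotProduct_self_eq_zero] at this
    exact hvj this
end
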